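/- arXiv:2012.07296 — 6 statements merged into one kernel-verified Lean document; each statement's English description precedes it below -/
import Mathlib

section
/- Let N be a positive integer. For each i ∈ {1,…,N}, let P_i be a nonempty finite set (the mode set), X_i a set with subsets X_{0,i} ⊆ X_i (initial set) and X_{u,i} ⊆ X_i (unsafe set), and for each p_i ∈ P_i let B_{i,p_i} : X_i → [0,∞) be a function and γ_{i,p_i}, λ_{i,p_i} ≥ 0 constants such that B_{i,p_i}(x_i) ≤ γ_{i,p_i} for all x_i ∈ X_{0,i} and B_{i,p_i}(x_i) ≥ λ_{i,p_i} for all x_i ∈ X_{u,i}. Let μ_1,…,μ_N > 0 satisfy Σ_{i=1}^N μ_i·min_{p_i∈P_i} λ_{i,p_i} > Σ_{i=1}^N μ_i·max_{p_i∈P_i} γ_{i,p_i}. Define B(x,p) := Σ_{i=1}^N μ_i B_{i,p_i}(x_i) for x = (x_1,…,x_N) and p = (p_1,…,p_N), and set γ := Σ_{i=1}^N μ_i·max_{p_i∈P_i} γ_{i,p_i} and λ := Σ_{i=1}^N μ_i·min_{p_i∈P_i} λ_{i,p_i}. Then B(x,p) ≤ γ for every x ∈ ∏_{i=1}^N X_{0,i}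 and every p ∈ ∏_{i=1}^N P_i, B(x,p) ≥ λ for every x ∈ ∏_{i=1}^N X_{u,i} and every p ∈ ∏_{i=1}^N P_i, and λ > γ. -/
open Finset

/-- Level-set part of the compositionality theorem: the weighted sum
`B(x,p) = ∑ i, μ i * B i (p i) (x i)` of control pseudo-barrier functions is at most
`γ = ∑ i, μ i * max_{p_i} γ_{i,p_i}` on the product of initial sets, at least
`λ = ∑ i, μ i * min_{p_i} λ_{i,p_i}` on the product of unsafe sets, and `λ > γ`. -/
theorem compositional_level_sets
    (N : ℕ) (hN : 0 < N)
    (P : Fin N → Type) [∀ i, Fintype (P i)] [∀ i, Nonempty (P i)]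
    (X : Fin N → Type)
    (X0 Xu : ∀ i, Set (X i))
    (B : ∀ i, P i → X i → ℝ)
    (hBnonneg : ∀ i (p : P i) (x : X i), 0 ≤ B i p x)
    (γ lam : ∀ i, P i → ℝ)
    (hγ : ∀ i (p : P i), 0 ≤ γ i p) (hlam : ∀ i (p : P i), 0 ≤ lam i p)
    (hInit : ∀ i (p : P i), ∀ x ∈ X0 i, B i p x ≤ γ i p)
    (hUnsafe : ∀ i (p : P i), ∀ x ∈ Xu i, lam i p ≤ B i p x)
    (μ : Fin N → ℝ) (hμ : ∀ i, 0 < μ i)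
    (hsum : ∑ i, μ i * univ.sup' univ_nonempty (γ i) <
            ∑ i, μ i * univ.inf' univ_nonempty (lam i)) :
    (∀ x : ∀ i, X i, (∀ i, x i ∈ X0 i) → ∀ p : ∀ i, P i,
        ∑ i, μ i * B i (p i) (x i) ≤ ∑ i, μ i * univ.sup' univ_nonempty (γ i)) ∧
    (∀ x : ∀ i, X i, (∀ i, x i ∈ Xu i) → ∀ p : ∀ i, P i,
        ∑ i, μ i * univ.inf' univ_nonempty (lam i) ≤ ∑ i, μ i * B i (p i) (x i)) ∧
    ∑ i, μ i * univ.sup' univ_nonempty (γ i) <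
      ∑ i, μ i * univ.inf' univ_nonempty (lam i) := by
  refine ⟨?_, ?_, hsum⟩
  · intro x hx p
    refine Finset.sum_le_sum fun i _ => ?_
    exact mul_le_mul_of_nonneg_left
      ((hInit i (p i) (x i) (hx i)).trans (Finset.le_sup' (γ i) (Finset.mem_univ (p i))))
      (hμ i).le
  · intro x hx p
    refine Finset.sum_le_sum fun i _ => ?_
    exact mul_le_mul_of_nonneg_left
      ((Finset.inf'_le (lam i) (Finset.mem_univ (p i))).trans (hUnsafe i (p i) (x i) (hx i)))
      (hμ i).le
end

section
/- Let N be a positive integer and, for each i ∈ {1,…,N}, let P_i be a nonempty finite set and Q_i : P_i × P_i → ℝ a function whose rows sum to zero, i.e. Σ_{p'_i ∈ P_i} Q_i(p_i, p'_i) = 0 for every p_i ∈ P_i. Define Q : (∏_{i=1}^N P_i) × (∏_{i=1}^N P_i) → ℝ by Q(p, p') := Σ_{i=1}^N Q_i(p_i, p'_i) · ∏_{j≠i} 1[p_j = p'_j], where 1[·] is the indicator of equality. Then for all real numbers μ_1,…,μ_N, all functions b_i : P_i → ℝ, and every p ∈ ∏_{i=1}^N P_i: Σ_{p' ∈ ∏_{i=1}^N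 P_i} Q(p, p') · (Σ_{i=1}^N μ_i b_i(p'_i)) = Σ_{i=1}^N μ_i Σ_{p'_i ∈ P_i} Q_i(p_i, p'_i) b_i(p'_i). -/
open Finset

lemma aux_ind_sum {N : ℕ} {P : Fin N → Type} [∀ i, Fintype (P i)]
    [∀ i, DecidableEq (P i)]
    (p : ∀ i, P i) (i : Fin N) (g : (∀ j, P j) → ℝ) :
    ∑ p' : ∀ j, P j, g p' * ∏ j ∈ univ.erase i, (if p j = p' j then (1:ℝ) else 0)
      = ∑ x : P i, g (Function.update p i x) := by
  classical
  rw [← Fintype.sum_fiberwise (fun p' : ∀ j, P j => p' i)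
    (fun p' => g p' * ∏ j ∈ univ.erase i, (if p j = p' j then (1:ℝ) else 0))]
  refine Finset.sum_congr rfl fun x _ => ?_
  rw [Fintype.sum_eq_single (⟨Function.update p i x, Function.update_self i x p⟩ :
      { p' : ∀ j, P j // p' i = x })]
  · have : ∀ j ∈ univ.erase i, (if p j = Function.update p i x j then (1:ℝ) else 0) = 1 := by
      intro j hj
      rw [Function.update_of_ne (Finset.ne_of_mem_erase hj)]
      simp
    rw [Finset.prod_congr rfl this]
    simp
  · rintro ⟨p', hx⟩ hne
    have hne' : p' ≠ Function.update p i x := fun h => hne (by simp [h])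
    have : ∃ j, j ≠ i ∧ p j ≠ p' j := by
      by_contra h
      push_neg at h
      apply hne'
      funext j
      by_cases hji : j = i
      · subst hji; simp [hx]
      · rw [Function.update_of_ne hji]; exact (h j hji).symm
    obtain ⟨j, hji, hpj⟩ := this
    rw [Finset.prod_eq_zero (Finset.mem_erase.2 ⟨hji, Finset.mem_univ j⟩)]
    · ring
    · simp [hpj]

/-- Kronecker-sum generator identity: if `Q i` are the subsystem generators (rows summing
to zero) and the interconnected generator over the product mode set is
`Q p p' = ∑ i, Q i (p i) (p' i) * ∏_{j ≠ i} 1[p j = p' j]`, then for weighted-sum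
functions one has
`∑ p', Q p p' * (∑ i, μ i * b i (p' i)) = ∑ i, μ i * ∑ p'_i, Q i (p i) p'_i * b i p'_i`. -/
theorem kronecker_sum_generator_identity
    (N : ℕ) (hN : 0 < N)
    (P : Fin N → Type) [∀ i, Fintype (P i)] [∀ i, Nonempty (P i)]
    [∀ i, DecidableEq (P i)]
    (Q : ∀ i, P i → P i → ℝ)
    (hrow : ∀ i (p : P i), ∑ p' : P i, Q i p p' = 0)
    (μ : Fin N → ℝ) (b : ∀ i, P i → ℝ) (p : ∀ i, P i) :
    ∑ p' : ∀ i, P i,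
        (∑ i, Q i (p i) (p' i) * ∏ j ∈ univ.erase i, (if p j = p' j then (1:ℝ) else 0))
          * (∑ i, μ i * b i (p' i))
      = ∑ i, μ i * ∑ p'i : P i, Q i (p i) p'i * b i p'i := by
  classical
  have step1 : ∀ p' : ∀ i, P i,
      (∑ i, Q i (p i) (p' i) * ∏ j ∈ univ.erase i, (if p j = p' j then (1:ℝ) else 0))
        * (∑ i, μ i * b i (p' i))
      = ∑ i, (Q i (p i) (p' i) * (∑ i', μ i' * b i' (p' i')))
          * ∏ j ∈ univ.erase i, (if p j = p' j then (1:ℝ) else 0) := by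
    intro p'
    rw [Finset.sum_mul]
    exact Finset.sum_congr rfl fun i _ => by ring
  simp_rw [step1]
  rw [Finset.sum_comm]
  refine Finset.sum_congr rfl fun i _ => ?_
  rw [aux_ind_sum p i (fun p' => Q i (p i) (p' i) * (∑ i', μ i' * b i' (p' i')))]
  have : ∀ x : P i,
      Q i (p i) (Function.update p i x i)
        * (∑ i', μ i' * b i' (Function.update p i x i'))
      = Q i (p i) x * (μ i * b i x)
        + Q i (p i) x * (∑ i' ∈ univ.erase i, μ i' * b i' (p i')) := by
    intro x
    rw [Function.update_self]
    rw [← Finset.add_sum_erase _ _ (Finset.mem_univ i), Function.update_self]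
    have : ∀ i' ∈ univ.erase i, μ i' * b i' (Function.update p i x i') = μ i' * b i' (p i') := by
      intro i' hi'
      rw [Function.update_of_ne (Finset.ne_of_mem_erase hi')]
    rw [Finset.sum_congr rfl this]
    ring
  rw [Finset.sum_congr rfl fun x _ => this x, Finset.sum_add_distrib,
    ← Finset.sum_mul, hrow, zero_mul, add_zero, Finset.mul_sum]
  exact Finset.sum_congr rfl fun x _ => by ring
end

section
/- Let N ≥ 2 be an integer. For i, j ∈ {1,…,N}, let μ_i > 0, ψ_i ≥ 0, λ̂_i > 0 and δ̂_{ij} ≥ 0 with δ̂_{ii} = 0 be constants; let κ_i, γ̂_i, α_i : [0,∞) → [0,∞) be of class K∞ (so α_i is a bijection of [0,∞) with inverse α_i⁻¹), and let ρ_i : [0,∞) → [0,∞) be nondecreasing. Assume for all s ≥ 0: κ_i(s) ≥ λ̂_i γ̂_i(s), and ρ_i((N−1)·α_j⁻¹(s)) ≤ δ̂_{ij} γ̂_j(s) for every j ≠ i. Then for all b_1,…,b_N ≥ 0 and y_1,…,y_N ≥ 0 with α_j(y_j) ≤ b_j for every j: Σ_{i=1}^N μ_i ( −κ_i(b_i)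 + ρ_i(Σ_{j≠i} y_j) + ψ_i ) ≤ Σ_{i=1}^N ( −μ_i λ̂_i + Σ_{j≠i} μ_j δ̂_{ji} ) γ̂_i(b_i) + Σ_{i=1}^N μ_i ψ_i. -/
open Finset

/-- A function `f : [0,∞) → [0,∞)` (modelled on `ℝ`) is of class K∞: it maps `[0,∞)`
to `[0,∞)`, is continuous and strictly increasing on `[0,∞)`, satisfies `f 0 = 0`,
and tends to `∞` at `∞`. -/
def IsKInf (f : ℝ → ℝ) : Prop :=
  (∀ s : ℝ, 0 ≤ s → 0 ≤ f s) ∧ ContinuousOn f (Set.Ici 0) ∧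
    StrictMonoOn f (Set.Ici 0) ∧ f 0 = 0 ∧
    Filter.Tendsto f Filter.atTop Filter.atTop

/-- The dissipation-inequality chain (display (23)) in the proof of the compositionality
theorem: under the small-gain hypotheses `κ_i(s) ≥ λ̂_i γ̂_i(s)` and
`ρ_i((N−1)·α_j⁻¹(s)) ≤ δ̂_{ij} γ̂_j(s)` (j ≠ i), for all `b_i ≥ 0`, `y_i ≥ 0` with
`α_j(y_j) ≤ b_j`:
`∑ i, μ i (−κ_i(b_i) + ρ_i(∑_{j≠i} y_j) + ψ_i)
   ≤ ∑ i, (−μ_i λ̂_i + ∑_{j≠i} μ_j δ̂_{ji}) γ̂_i(b_i) + ∑ i, μ_i ψ_i`. -/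
theorem small_gain_dissipation_chain
    (N : ℕ) (hN : 2 ≤ N)
    (μ ψ lamHat : Fin N → ℝ) (δHat : Fin N → Fin N → ℝ)
    (hμ : ∀ i, 0 < μ i) (hψ : ∀ i, 0 ≤ ψ i) (hlamHat : ∀ i, 0 < lamHat i)
    (hδ : ∀ i j, 0 ≤ δHat i j) (hδdiag : ∀ i, δHat i i = 0)
    (κ γHat α : Fin N → ℝ → ℝ)
    (hκK : ∀ i, IsKInf (κ i)) (hγK : ∀ i, IsKInf (γHat i)) (hαK : ∀ i, IsKInf (α i))
    -- `αinv i` is the inverse of the bijection `α i : [0,∞) → [0,∞)`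
    (αinv : Fin N → ℝ → ℝ)
    (hαinv_nonneg : ∀ i s, 0 ≤ s → 0 ≤ αinv i s)
    (hαinv_right : ∀ i s, 0 ≤ s → α i (αinv i s) = s)
    (hαinv_left : ∀ i t, 0 ≤ t → αinv i (α i t) = t)
    (ρ : Fin N → ℝ → ℝ)
    (hρmono : ∀ i, MonotoneOn (ρ i) (Set.Ici 0))
    (hρnonneg : ∀ i s, 0 ≤ s → 0 ≤ ρ i s)
    -- small-gain assumption
    (hgain1 : ∀ i (s : ℝ), 0 ≤ s → lamHat i * γHat i s ≤ κ i s)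
    (hgain2 : ∀ i j, j ≠ i → ∀ s : ℝ, 0 ≤ s →
        ρ i ((N - 1 : ℝ) * αinv j s) ≤ δHat i j * γHat j s)
    (b y : Fin N → ℝ) (hb : ∀ i, 0 ≤ b i) (hy : ∀ i, 0 ≤ y i)
    (hαyb : ∀ j, α j (y j) ≤ b j) :
    ∑ i, μ i * (-(κ i (b i)) + ρ i (∑ j ∈ univ.erase i, y j) + ψ i)
      ≤ ∑ i, (-(μ i * lamHat i) + ∑ j ∈ univ.erase i, μ j * δHat j i) * γHat i (b i)
          + ∑ i, μ i * ψ i := by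

  -- nonnegativity helpers
  have hγnn : ∀ i s, 0 ≤ s → 0 ≤ γHat i s := fun i => (hγK i).1
  -- key bound on the interconnection term
  have hkey : ∀ i : Fin N,
      ρ i (∑ j ∈ univ.erase i, y j) ≤ ∑ j ∈ univ.erase i, δHat i j * γHat j (b j) := by
    intro i
    have hne : (univ.erase i).Nonempty := by
      have hcard : (univ.erase i).card = N - 1 := by
        simp [Finset.card_erase_of_mem, Finset.card_univ]
      rw [← Finset.card_pos, hcard]
      omega
    obtain ⟨j0, hj0mem, hj0max⟩ := Finset.exists_max_image (univ.erase i) y hne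
    have hj0ne : j0 ≠ i := Finset.ne_of_mem_erase hj0mem
    have hsum_nn : 0 ≤ ∑ j ∈ univ.erase i, y j :=
      Finset.sum_nonneg fun j _ => hy j
    have hcard : (univ.erase i).card = N - 1 := by
      simp [Finset.card_erase_of_mem, Finset.card_univ]
    have hNc : ((N - 1 : ℕ) : ℝ) = (N : ℝ) - 1 := by
      have : (1 : ℕ) ≤ N := by omega
      push_cast [Nat.cast_sub this]
      ring
    have h1 : ∑ j ∈ univ.erase i, y j ≤ (N - 1 : ℝ) * y j0 := by
      have := Finset.sum_le_card_nsmul (univ.erase i) y (y j0)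
        (fun x hx => hj0max x hx)
      rw [hcard] at this
      calc ∑ j ∈ univ.erase i, y j ≤ (N - 1) • y j0 := this
        _ = (N - 1 : ℝ) * y j0 := by rw [nsmul_eq_mul, hNc]
    -- y j0 ≤ αinv j0 (b j0)
    have hαy_nn : 0 ≤ α j0 (y j0) := (hαK j0).1 _ (hy j0)
    have hb0 := hb j0
    have hinv_mono : αinv j0 (α j0 (y j0)) ≤ αinv j0 (b j0) := by
      by_contra hcon
      push_neg at hcon
      have h2 := ((hαK j0).2.2.1) (Set.mem_Ici.2 (hαinv_nonneg j0 _ hb0))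
        (Set.mem_Ici.2 (hαinv_nonneg j0 _ hαy_nn)) hcon
      rw [hαinv_right j0 _ hb0, hαinv_right j0 _ hαy_nn] at h2
      exact absurd (hαyb j0) (not_le.2 h2)
    have h2 : y j0 ≤ αinv j0 (b j0) := by
      rwa [hαinv_left j0 _ (hy j0)] at hinv_mono
    have hN1 : (0 : ℝ) ≤ (N - 1 : ℝ) := by
      have : (2 : ℝ) ≤ (N : ℝ) := by exact_mod_cast hN
      linarith
    have h3 : ∑ j ∈ univ.erase i, y j ≤ (N - 1 : ℝ) * αinv j0 (b j0) :=
      h1.trans (by nlinarith [hy j0])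
    have h4 : ρ i (∑ j ∈ univ.erase i, y j) ≤ ρ i ((N - 1 : ℝ) * αinv j0 (b j0)) :=
      hρmono i (Set.mem_Ici.2 hsum_nn)
        (Set.mem_Ici.2 (hsum_nn.trans h3)) h3
    have h5 : ρ i ((N - 1 : ℝ) * αinv j0 (b j0)) ≤ δHat i j0 * γHat j0 (b j0) :=
      hgain2 i j0 hj0ne _ hb0
    refine (h4.trans h5).trans ?_
    exact Finset.single_le_sum
      (fun j _ => mul_nonneg (hδ i j) (hγnn j _ (hb j))) hj0mem
  -- step 1: bound LHS by the intermediate expression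
  have step1 : ∑ i, μ i * (-(κ i (b i)) + ρ i (∑ j ∈ univ.erase i, y j) + ψ i)
      ≤ ∑ i, μ i * (-(lamHat i * γHat i (b i))
          + (∑ j ∈ univ.erase i, δHat i j * γHat j (b j)) + ψ i) := by
    refine Finset.sum_le_sum fun i _ => ?_
    have h1 := hgain1 i (b i) (hb i)
    have h2 := hkey i
    have hμi := (hμ i).le
    nlinarith [mul_le_mul_of_nonneg_left h1 hμi, mul_le_mul_of_nonneg_left h2 hμi]
  refine step1.trans (le_of_eq ?_)
  -- step 2: rearrange, using δHat i i = 0 to extend sums over erase to full sums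
  have herase1 : ∀ i : Fin N, ∑ j ∈ univ.erase i, δHat i j * γHat j (b j)
      = ∑ j, δHat i j * γHat j (b j) := by
    intro i
    rw [← Finset.sum_erase_add _ _ (Finset.mem_univ i), hδdiag i]
    ring
  have herase2 : ∀ i : Fin N, ∑ j ∈ univ.erase i, μ j * δHat j i
      = ∑ j, μ j * δHat j i := by
    intro i
    rw [← Finset.sum_erase_add _ _ (Finset.mem_univ i), hδdiag i]
    ring
  simp only [herase1, herase2]
  have hswap : ∑ i, μ i * ∑ j, δHat i j * γHat j (b j)
      = ∑ j, (∑ i, μ i * δHat i j) * γHat j (b j) := by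
    simp only [Finset.mul_sum, Finset.sum_mul]
    rw [Finset.sum_comm]
    ring_nf
  calc ∑ i, μ i * (-(lamHat i * γHat i (b i))
          + (∑ j, δHat i j * γHat j (b j)) + ψ i)
      = ∑ i, (-(μ i * lamHat i) * γHat i (b i) + μ i * ψ i)
          + ∑ i, μ i * ∑ j, δHat i j * γHat j (b j) := by
        rw [← Finset.sum_add_distrib]; congr 1; ext i; ring
    _ = ∑ i, (-(μ i * lamHat i) * γHat i (b i) + μ i * ψ i)
          + ∑ i, (∑ j, μ j * δHat j i) * γHat i (b i) := by rw [hswap]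
    _ = ∑ i, (-(μ i * lamHat i) + ∑ j, μ j * δHat j i) * γHat i (b i)
          + ∑ i, μ i * ψ i := by
        rw [← Finset.sum_add_distrib, ← Finset.sum_add_distrib]
        congr 1; ext i; ring
end

section
/- Let N ≥ 1 be an integer, μ_i > 0 and c_i > 0 real constants for i ∈ {1,…,N}, and γ̂_1,…,γ̂_N : [0,∞) → [0,∞) functions of class K∞. Define κ : [0,∞) → [0,∞) by κ(s) := inf { Σ_{i=1}^N c_i γ̂_i(b_i) : b ∈ [0,∞)^N, Σ_{i=1}^N μ_i b_i = s }. Then: (i) for every s ≥ 0 the infimum is attained; (ii) κ(0) = 0; (iii) κ is strictly increasing; (iv) κ is continuous; (v) κ(s) → ∞ as s → ∞ (so κ is of class K∞); and (vi) κ(Σ_{i=1}^N μ_i b_i) ≤ Σ_{i=1}^N c_i γ̂_i(b_i) for every b ∈ [0,∞)^N. -/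
open Finset

/-- The function `κ(s) := inf { ∑ i, c_i γ̂_i(b_i) : b ∈ [0,∞)^N, ∑ i, μ_i b_i = s }`
is well-defined (the infimum is attained for `s ≥ 0`), satisfies `κ(0) = 0`, is strictly
increasing and continuous on `[0,∞)`, tends to `∞` at `∞`, and satisfies
`κ(∑ i, μ_i b_i) ≤ ∑ i, c_i γ̂_i(b_i)` for every `b ∈ [0,∞)^N`. -/
theorem kappa_inf_is_KInf
    (N : ℕ) (hN : 1 ≤ N)
    (μ c : Fin N → ℝ) (hμ : ∀ i, 0 < μ i) (hc : ∀ i, 0 < c i)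
    (γHat : Fin N → ℝ → ℝ) (hγK : ∀ i, IsKInf (γHat i))
    (κ : ℝ → ℝ)
    (hκdef : ∀ s : ℝ, κ s = sInf {t : ℝ | ∃ b : Fin N → ℝ,
        (∀ i, 0 ≤ b i) ∧ (∑ i, μ i * b i) = s ∧ t = ∑ i, c i * γHat i (b i)}) :
    (∀ s : ℝ, 0 ≤ s → ∃ b : Fin N → ℝ,
        (∀ i, 0 ≤ b i) ∧ (∑ i, μ i * b i) = s ∧ κ s = ∑ i, c i * γHat i (b i)) ∧
    κ 0 = 0 ∧
    StrictMonoOn κ (Set.Ici 0) ∧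
    ContinuousOn κ (Set.Ici 0) ∧
    Filter.Tendsto κ Filter.atTop Filter.atTop ∧
    (∀ b : Fin N → ℝ, (∀ i, 0 ≤ b i) →
        κ (∑ i, μ i * b i) ≤ ∑ i, c i * γHat i (b i)) := by
  have i₀ : Fin N := ⟨0, hN⟩
  have hγnn : ∀ i, ∀ s : ℝ, 0 ≤ s → 0 ≤ γHat i s := fun i => (hγK i).1
  have hγc : ∀ i, ContinuousOn (γHat i) (Set.Ici 0) := fun i => (hγK i).2.1
  have hγsm : ∀ i, StrictMonoOn (γHat i) (Set.Ici 0) := fun i => (hγK i).2.2.1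
  have hγ0 : ∀ i, γHat i 0 = 0 := fun i => (hγK i).2.2.2.1
  have hγtop : ∀ i, Filter.Tendsto (γHat i) Filter.atTop Filter.atTop :=
    fun i => (hγK i).2.2.2.2
  -- lower bound 0 for all members of the defining set
  have hlb : ∀ s : ℝ, ∀ t ∈ {t : ℝ | ∃ b : Fin N → ℝ,
      (∀ i, 0 ≤ b i) ∧ (∑ i, μ i * b i) = s ∧ t = ∑ i, c i * γHat i (b i)}, (0:ℝ) ≤ t := by
    rintro s t ⟨b, hbnn, -, rfl⟩
    exact Finset.sum_nonneg fun i _ => mul_nonneg (hc i).le (hγnn i _ (hbnn i))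
  have hbdd : ∀ s : ℝ, BddBelow {t : ℝ | ∃ b : Fin N → ℝ,
      (∀ i, 0 ≤ b i) ∧ (∑ i, μ i * b i) = s ∧ t = ∑ i, c i * γHat i (b i)} :=
    fun s => ⟨0, fun t ht => hlb s t ht⟩
  have hκle : ∀ (s : ℝ) (b : Fin N → ℝ), (∀ i, 0 ≤ b i) → (∑ i, μ i * b i) = s →
      κ s ≤ ∑ i, c i * γHat i (b i) := by
    intro s b hbnn hbsum
    rw [hκdef]
    exact csInf_le (hbdd s) ⟨b, hbnn, hbsum, rfl⟩
  -- nonemptiness of the feasible set for s ≥ 0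
  have hwit : ∀ s : ℝ, 0 ≤ s → ∃ b : Fin N → ℝ, (∀ i, 0 ≤ b i) ∧ (∑ i, μ i * b i) = s := by
    intro s hs
    refine ⟨fun i => if i = i₀ then s / μ i₀ else 0, fun i => ?_, ?_⟩
    · by_cases h : i = i₀ <;> simp [h, div_nonneg hs (hμ i₀).le]
    · have : ∀ i : Fin N, μ i * (if i = i₀ then s / μ i₀ else 0)
          = if i = i₀ then μ i₀ * (s / μ i₀) else 0 := by
        intro i; by_cases h : i = i₀ <;> simp [h]
      rw [Finset.sum_congr rfl fun i _ => this i, Finset.sum_ite_eq' Finset.univ i₀,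
        if_pos (Finset.mem_univ i₀)]
      exact mul_div_cancel₀ s (hμ i₀).ne'
  have hne : ∀ s : ℝ, 0 ≤ s → Set.Nonempty {t : ℝ | ∃ b : Fin N → ℝ,
      (∀ i, 0 ≤ b i) ∧ (∑ i, μ i * b i) = s ∧ t = ∑ i, c i * γHat i (b i)} := by
    intro s hs
    obtain ⟨b, h1, h2⟩ := hwit s hs
    exact ⟨_, b, h1, h2, rfl⟩
  -- attainment
  have hattain : ∀ s : ℝ, 0 ≤ s → ∃ b : Fin N → ℝ,
      (∀ i, 0 ≤ b i) ∧ (∑ i, μ i * b i) = s ∧ κ s = ∑ i, c i * γHat i (b i) := by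
    intro s hs
    set F : Set (Fin N → ℝ) := {b | (∀ i, 0 ≤ b i) ∧ (∑ i, μ i * b i) = s} with hF
    have hFne : F.Nonempty := hwit s hs
    have hFsub : F ⊆ Set.pi Set.univ (fun i => Set.Icc 0 (s / μ i)) := by
      intro b hb i _
      refine ⟨hb.1 i, ?_⟩
      have h1 : μ i * b i ≤ ∑ j, μ j * b j :=
        Finset.single_le_sum (fun j _ => mul_nonneg (hμ j).le (hb.1 j)) (Finset.mem_univ i)
      rw [hb.2] at h1
      rw [le_div_iff₀ (hμ i)]
      linarith [h1]
    have hFclosed : IsClosed F := by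
      have h1 : IsClosed {b : Fin N → ℝ | ∀ i, 0 ≤ b i} := by
        have he : {b : Fin N → ℝ | ∀ i, 0 ≤ b i} = ⋂ i, {b | 0 ≤ b i} := by
          ext b; simp
        rw [he]
        exact isClosed_iInter fun i => isClosed_le continuous_const (continuous_apply i)
      have hcs : Continuous (fun b : Fin N → ℝ => ∑ i, μ i * b i) :=
        continuous_finset_sum _ fun i _ => continuous_const.mul (continuous_apply i)
      have h2 : IsClosed {b : Fin N → ℝ | (∑ i, μ i * b i) = s} :=
        isClosed_eq hcs continuous_const
      exact h1.inter h2
    have hFcomp : IsCompact F :=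
      (isCompact_univ_pi fun i => isCompact_Icc).of_isClosed_subset hFclosed hFsub
    have hgcont : ContinuousOn (fun b : Fin N → ℝ => ∑ i, c i * γHat i (b i)) F := by
      apply continuousOn_finset_sum
      intro i _
      exact continuousOn_const.mul
        ((hγc i).comp (continuous_apply i).continuousOn fun b hb => Set.mem_Ici.mpr (hb.1 i))
    obtain ⟨b, hbF, hbmin⟩ := hFcomp.exists_isMinOn hFne hgcont
    refine ⟨b, hbF.1, hbF.2, ?_⟩
    rw [hκdef]
    apply le_antisymm
    · exact csInf_le (hbdd s) ⟨b, hbF.1, hbF.2, rfl⟩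
    · apply le_csInf (hne s hs)
      rintro t ⟨b', hb'nn, hb'sum, rfl⟩
      exact hbmin ⟨hb'nn, hb'sum⟩
  -- strict monotonicity
  have hmono : StrictMonoOn κ (Set.Ici 0) := by
    intro s hs t ht hst
    simp only [Set.mem_Ici] at hs ht
    obtain ⟨b, hbnn, hbsum, hbval⟩ := hattain t ht
    have htpos : 0 < t := lt_of_le_of_lt hs hst
    have hrat0 : 0 ≤ s / t := div_nonneg hs htpos.le
    have hrat1 : s / t < 1 := (div_lt_one htpos).mpr hst
    have hb'nn : ∀ i, 0 ≤ (s / t) * b i := fun i => mul_nonneg hrat0 (hbnn i)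
    have hb'sum : (∑ i, μ i * ((s / t) * b i)) = s := by
      have : (∑ i, μ i * ((s / t) * b i)) = (s / t) * ∑ i, μ i * b i := by
        rw [Finset.mul_sum]; exact Finset.sum_congr rfl fun i _ => by ring
      rw [this, hbsum, div_mul_cancel₀ s htpos.ne']
    have hex : ∃ i, 0 < b i := by
      by_contra h
      push_neg at h
      have : (∑ i, μ i * b i) = 0 := Finset.sum_eq_zero fun i _ => by
        have : b i = 0 := le_antisymm (h i) (hbnn i)
        rw [this, mul_zero]
      rw [hbsum] at this; linarith
    obtain ⟨j, hj⟩ := hex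
    have hlt : (∑ i, c i * γHat i ((s / t) * b i)) < ∑ i, c i * γHat i (b i) := by
      apply Finset.sum_lt_sum
      · intro i _
        apply mul_le_mul_of_nonneg_left _ (hc i).le
        exact (hγsm i).monotoneOn (Set.mem_Ici.mpr (hb'nn i)) (Set.mem_Ici.mpr (hbnn i))
          (mul_le_of_le_one_left (hbnn i) hrat1.le)
      · refine ⟨j, Finset.mem_univ j, ?_⟩
        apply mul_lt_mul_of_pos_left _ (hc j)
        exact hγsm j (Set.mem_Ici.mpr (hb'nn j)) (Set.mem_Ici.mpr (hbnn j))
          (mul_lt_of_lt_one_left hj hrat1)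
    calc κ s ≤ ∑ i, c i * γHat i ((s / t) * b i) := hκle s _ hb'nn hb'sum
      _ < ∑ i, c i * γHat i (b i) := hlt
      _ = κ t := hbval.symm
  -- key estimate for continuity
  have hkey : ∀ s t : ℝ, 0 ≤ s → s ≤ t → ∃ a : ℝ, 0 ≤ a ∧ μ i₀ * a ≤ s ∧
      κ t ≤ κ s + c i₀ * (γHat i₀ (a + (t - s) / μ i₀) - γHat i₀ a) := by
    intro s t hs hst
    obtain ⟨b, hbnn, hbsum, hbval⟩ := hattain s hs
    set δ : ℝ := (t - s) / μ i₀ with hδdef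
    have hδ : 0 ≤ δ := div_nonneg (by linarith) (hμ i₀).le
    set b' : Fin N → ℝ := fun i => b i + if i = i₀ then δ else 0 with hb'
    have hb'nn : ∀ i, 0 ≤ b' i := by
      intro i
      by_cases h : i = i₀ <;> simp only [hb', h, if_pos, if_neg, ite_true, ite_false,
        add_zero]
      · exact add_nonneg (hbnn i₀) hδ
      · exact hbnn i
    have hb'sum : (∑ i, μ i * b' i) = t := by
      have h1 : ∀ i : Fin N, μ i * b' i = μ i * b i + (if i = i₀ then μ i₀ * δ else 0) := by
        intro i; by_cases h : i = i₀ <;> simp [hb', h] <;> ring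
      rw [Finset.sum_congr rfl fun i _ => h1 i, Finset.sum_add_distrib, hbsum,
        Finset.sum_ite_eq' Finset.univ i₀, if_pos (Finset.mem_univ i₀), hδdef,
        mul_div_cancel₀ _ (hμ i₀).ne']
      ring
    have hgb' : (∑ i, c i * γHat i (b' i))
        = (∑ i, c i * γHat i (b i)) + c i₀ * (γHat i₀ (b i₀ + δ) - γHat i₀ (b i₀)) := by
      rw [← Finset.add_sum_erase _ (fun i => c i * γHat i (b' i)) (Finset.mem_univ i₀),
        ← Finset.add_sum_erase _ (fun i => c i * γHat i (b i)) (Finset.mem_univ i₀)]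
      have h2 : (∑ i ∈ Finset.univ.erase i₀, c i * γHat i (b' i))
          = ∑ i ∈ Finset.univ.erase i₀, c i * γHat i (b i) := by
        refine Finset.sum_congr rfl fun i hi => ?_
        have : i ≠ i₀ := Finset.ne_of_mem_erase hi
        simp [hb', this]
      rw [h2]
      have h3 : b' i₀ = b i₀ + δ := by simp [hb']
      rw [h3]; ring
    have haub : μ i₀ * b i₀ ≤ s := by
      have h1 : μ i₀ * b i₀ ≤ ∑ j, μ j * b j :=
        Finset.single_le_sum (fun j _ => mul_nonneg (hμ j).le (hbnn j)) (Finset.mem_univ i₀)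
      rw [hbsum] at h1; exact h1
    refine ⟨b i₀, hbnn i₀, haub, ?_⟩
    have := hκle t b' hb'nn hb'sum
    rw [hgb'] at this
    rw [← hbval] at this
    exact this
  -- continuity
  have hcont : ContinuousOn κ (Set.Ici 0) := by
    intro x hx
    simp only [Set.mem_Ici] at hx
    rw [Metric.continuousWithinAt_iff]
    intro ε hε
    have hK : IsCompact (Set.Icc (0:ℝ) ((x + 1) / μ i₀ + 1)) := isCompact_Icc
    have hucts : UniformContinuousOn (γHat i₀) (Set.Icc 0 ((x + 1) / μ i₀ + 1)) :=
      hK.uniformContinuousOn_of_continuous ((hγc i₀).mono Set.Icc_subset_Ici_self)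
    rw [Metric.uniformContinuousOn_iff] at hucts
    obtain ⟨d, hd, hd'⟩ := hucts (ε / c i₀) (div_pos hε (hc i₀))
    refine ⟨min (min 1 (μ i₀)) (d * μ i₀), lt_min (lt_min one_pos (hμ i₀)) (mul_pos hd (hμ i₀)), ?_⟩
    intro y hy hdist
    simp only [Set.mem_Ici] at hy
    have main : ∀ s t : ℝ, 0 ≤ s → s ≤ t → t ≤ x + 1 →
        t - s < min (min 1 (μ i₀)) (d * μ i₀) → κ t - κ s < ε := by
      intro s t hs hst htx hts
      obtain ⟨a, ha0, has, hineq⟩ := hkey s t hs hst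
      set δ : ℝ := (t - s) / μ i₀ with hδdef
      have hδ0 : 0 ≤ δ := div_nonneg (by linarith) (hμ i₀).le
      have hδ1 : δ < 1 := by
        rw [hδdef, div_lt_one (hμ i₀)]
        calc t - s < min (min 1 (μ i₀)) (d * μ i₀) := hts
          _ ≤ min 1 (μ i₀) := min_le_left _ _
          _ ≤ μ i₀ := min_le_right _ _
      have hδd : δ < d := by
        rw [hδdef, div_lt_iff₀ (hμ i₀)]
        calc t - s < min (min 1 (μ i₀)) (d * μ i₀) := hts
          _ ≤ d * μ i₀ := min_le_right _ _
      have haK : a ∈ Set.Icc (0:ℝ) ((x + 1) / μ i₀ + 1) := by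
        constructor
        · exact ha0
        · rw [le_div_iff₀ (hμ i₀)] at *
          have : a ≤ (x + 1) / μ i₀ := by
            rw [le_div_iff₀ (hμ i₀)]
            have hst1 : s ≤ x + 1 := le_trans hst htx
            calc a * μ i₀ = μ i₀ * a := mul_comm _ _
              _ ≤ s := has
              _ ≤ x + 1 := hst1
          linarith
      have haδK : a + δ ∈ Set.Icc (0:ℝ) ((x + 1) / μ i₀ + 1) := by
        constructor
        · linarith
        · have : a ≤ (x + 1) / μ i₀ := by
            rw [le_div_iff₀ (hμ i₀)]
            have hst1 : s ≤ x + 1 := le_trans hst htx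
            calc a * μ i₀ = μ i₀ * a := mul_comm _ _
              _ ≤ s := has
              _ ≤ x + 1 := hst1
          linarith
      have hdista : dist (a + δ) a < d := by
        rw [Real.dist_eq]
        rw [show a + δ - a = δ by ring, abs_of_nonneg hδ0]
        exact hδd
      have hγclose := hd' (a + δ) haδK a haK hdista
      rw [Real.dist_eq] at hγclose
      have h4 : γHat i₀ (a + δ) - γHat i₀ a < ε / c i₀ :=
        lt_of_le_of_lt (le_abs_self _) hγclose
      have h5 : c i₀ * (γHat i₀ (a + δ) - γHat i₀ a) < c i₀ * (ε / c i₀) :=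
        mul_lt_mul_of_pos_left h4 (hc i₀)
      rw [mul_div_cancel₀ ε (hc i₀).ne'] at h5
      linarith [hineq]
    have hmonole : ∀ s t : ℝ, 0 ≤ s → s ≤ t → κ s ≤ κ t := by
      intro s t hs hst
      rcases eq_or_lt_of_le hst with rfl | h
      · exact le_rfl
      · exact (hmono (Set.mem_Ici.mpr hs) (Set.mem_Ici.mpr (le_trans hs hst)) h).le
    rw [Real.dist_eq]
    rcases le_total y x with hyx | hxy
    · have h1 : κ x - κ y < ε := by
        apply main y x hy hyx (by linarith)
        rw [Real.dist_eq] at hdist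
        calc x - y ≤ |y - x| := by rw [abs_sub_comm]; exact le_abs_self _
          _ < _ := hdist
      have h2 : κ y ≤ κ x := hmonole y x hy hyx
      rw [abs_of_nonpos (by linarith)]
      linarith
    · have hyx1 : y ≤ x + 1 := by
        rw [Real.dist_eq] at hdist
        have : y - x ≤ |y - x| := le_abs_self _
        have h3 : |y - x| < min (min 1 (μ i₀)) (d * μ i₀) := hdist
        have h4 : min (min 1 (μ i₀)) (d * μ i₀) ≤ 1 :=
          le_trans (min_le_left _ _) (min_le_left _ _)
        linarith
      have h1 : κ y - κ x < ε := by
        apply main x y hx hxy hyx1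
        rw [Real.dist_eq] at hdist
        calc y - x ≤ |y - x| := le_abs_self _
          _ < _ := hdist
      have h2 : κ x ≤ κ y := hmonole x y hx hxy
      rw [abs_of_nonneg (by linarith)]
      linarith
  -- tendsto atTop
  have htop : Filter.Tendsto κ Filter.atTop Filter.atTop := by
    rw [Filter.tendsto_atTop]
    intro K
    have hRi : ∀ i, ∃ R : ℝ, 0 ≤ R ∧ ∀ r : ℝ, R ≤ r → K / c i ≤ γHat i r := by
      intro i
      obtain ⟨R, hR⟩ := (Filter.tendsto_atTop.mp (hγtop i) (K / c i)).exists_forall_of_atTop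
      exact ⟨max R 0, le_max_right _ _, fun r hr => hR r (le_trans (le_max_left _ _) hr)⟩
    choose R hR0 hRspec using hRi
    have hNe : Nonempty (Fin N) := ⟨i₀⟩
    set B : ℝ := Finset.univ.sup' Finset.univ_nonempty (fun i => μ i * R i) with hB
    have hNpos : (0:ℝ) < (N:ℝ) := by exact_mod_cast Nat.lt_of_lt_of_le Nat.zero_lt_one hN
    have hB0 : 0 ≤ B := le_trans (mul_nonneg (hμ i₀).le (hR0 i₀))
      (Finset.le_sup' (f := fun i => μ i * R i) (Finset.mem_univ i₀))
    filter_upwards [Filter.eventually_ge_atTop ((N:ℝ) * B)] with s hs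
    have hs0 : 0 ≤ s := le_trans (mul_nonneg hNpos.le hB0) hs
    rw [hκdef]
    apply le_csInf (hne s hs0)
    rintro t ⟨b, hbnn, hbsum, rfl⟩
    have hsum_const : (∑ _i : Fin N, s / (N:ℝ)) = s := by
      rw [Finset.sum_const, Finset.card_univ, Fintype.card_fin, nsmul_eq_mul]
      field_simp
    have hle : (∑ _i : Fin N, s / (N:ℝ)) ≤ ∑ i, μ i * b i := by
      rw [hsum_const, hbsum]
    obtain ⟨i, _, hi⟩ := Finset.exists_le_of_sum_le ⟨i₀, Finset.mem_univ i₀⟩ hle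
    have hBs : B ≤ s / (N:ℝ) := by
      rw [le_div_iff₀ hNpos]
      linarith [hs]
    have hμRB : μ i * R i ≤ B := Finset.le_sup' (f := fun j => μ j * R j) (Finset.mem_univ i)
    have hRb : R i ≤ b i := by
      have : μ i * R i ≤ μ i * b i := le_trans hμRB (le_trans hBs hi)
      exact le_of_mul_le_mul_left this (hμ i)
    have hγ : K / c i ≤ γHat i (b i) := hRspec i (b i) hRb
    have h1 : c i * γHat i (b i) ≤ ∑ j, c j * γHat j (b j) :=
      Finset.single_le_sum (fun j _ => mul_nonneg (hc j).le (hγnn j _ (hbnn j)))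
        (Finset.mem_univ i)
    have h2 : K ≤ c i * γHat i (b i) := by
      have := (div_le_iff₀ (hc i)).mp hγ
      nlinarith
    linarith
  -- κ 0 = 0
  have hκ0 : κ 0 = 0 := by
    have h1 : κ 0 ≤ ∑ i, c i * γHat i ((fun _ : Fin N => (0:ℝ)) i) := by
      apply hκle 0 (fun _ => 0) (fun _ => le_rfl)
      simp
    simp only [hγ0, mul_zero, Finset.sum_const_zero] at h1
    have h2 : 0 ≤ κ 0 := by
      rw [hκdef]
      exact le_csInf (hne 0 le_rfl) (hlb 0)
    linarith
  exact ⟨hattain, hκ0, hmono, hcont, htop, fun b hb => hκle _ b hb rfl⟩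
end

section
/- Let N ≥ 1, let Λ = diag(λ̂_1,…,λ̂_N) be a real diagonal matrix with λ̂_i > 0 for all i, and let Δ be an N×N real matrix with all entries nonnegative. If every complex eigenvalue z of the matrix Λ⁻¹Δ satisfies |z| < 1 (i.e. the spectral radius of Λ⁻¹Δ is strictly less than one), then there exists a vector μ ∈ ℝ^N with all entries strictly positive such that every entry of the row vector μᵀ(−Λ+Δ) is strictly negative. -/
open Finset Matrix

attribute [local instance] Matrix.linftyOpNormedRing Matrix.linftyOpNormedAlgebra

/-- Remark 4.5: if `Λ = diag(λ̂_1,…,λ̂_N)` with `λ̂_i > 0`, `Δ` has nonnegative entries,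
and the spectral radius of `Λ⁻¹Δ` is strictly less than one (every complex eigenvalue
has modulus `< 1`), then there exists a strictly positive vector `μ` whose row vector
`μᵀ(−Λ+Δ)` has all entries strictly negative. -/
theorem small_gain_spectral_radius
    (N : ℕ) (hN : 1 ≤ N)
    (lamHat : Fin N → ℝ) (hlam : ∀ i, 0 < lamHat i)
    (Δ : Matrix (Fin N) (Fin N) ℝ) (hΔ : ∀ i j, 0 ≤ Δ i j)
    (hspec : ∀ z ∈ spectrum ℂ
        (((Matrix.diagonal lamHat)⁻¹ * Δ).map (Complex.ofReal ·)),
        ‖z‖ < 1) :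
    ∃ μ : Fin N → ℝ, (∀ i, 0 < μ i) ∧
      ∀ j, ∑ i, μ i * (-(Matrix.diagonal lamHat) + Δ) i j < 0 := by
  classical
  haveI : Nonempty (Fin N) := ⟨⟨0, hN⟩⟩
  haveI : CompleteSpace (Matrix (Fin N) (Fin N) ℂ) := FiniteDimensional.complete ℂ _
  set M : Matrix (Fin N) (Fin N) ℝ := (Matrix.diagonal lamHat)⁻¹ * Δ with hMdef
  have hinv : (Matrix.diagonal lamHat)⁻¹ = Matrix.diagonal fun i => (lamHat i)⁻¹ :=
    Matrix.inv_eq_right_inv (by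
      rw [Matrix.diagonal_mul_diagonal]
      have h : (fun i => lamHat i * (lamHat i)⁻¹) = fun _ => (1 : ℝ) :=
        funext fun i => mul_inv_cancel₀ (hlam i).ne'
      rw [h, Matrix.diagonal_one])
  have hMentry : ∀ i j, M i j = (lamHat i)⁻¹ * Δ i j := by
    intro i j
    rw [hMdef, hinv, Matrix.diagonal_mul]
  have hMnn : ∀ i j, 0 ≤ M i j := fun i j => by
    rw [hMentry]; exact mul_nonneg (inv_nonneg.mpr (hlam i).le) (hΔ i j)
  have hpow_nn : ∀ (k : ℕ) (i j : Fin N), 0 ≤ (M ^ k) i j := by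
    intro k
    induction k with
    | zero =>
        intro i j
        rw [pow_zero, Matrix.one_apply]
        split_ifs <;> norm_num
    | succ k ih =>
        intro i j
        rw [pow_succ, Matrix.mul_apply]
        exact Finset.sum_nonneg fun p _ => mul_nonneg (ih i p) (hMnn p j)
  set Mc : Matrix (Fin N) (Fin N) ℂ := M.map (Complex.ofReal ·) with hMc
  -- spectral radius is < 1
  have hsr : spectralRadius ℂ Mc < 1 := by
    have h := spectrum.spectralRadius_lt_of_forall_lt (a := Mc) (r := 1)
      (fun z hz => by
        have h1 : ‖z‖ < 1 := by
          exact hspec z hz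
        exact_mod_cast h1)
    simpa using h
  -- Gelfand's formula gives a power with small norm
  have hgel := spectrum.pow_nnnorm_pow_one_div_tendsto_nhds_spectralRadius Mc
  obtain ⟨r, hr1, hr2⟩ := exists_between hsr
  have hev1 : ∀ᶠ n : ℕ in Filter.atTop,
      ((‖Mc ^ n‖₊ : ENNReal) ^ (1 / (n : ℝ))) < r := hgel.eventually_lt_const hr1
  have hrtop : Filter.Tendsto (fun n : ℕ => r ^ n) Filter.atTop (nhds 0) :=
    ENNReal.tendsto_pow_atTop_nhds_zero_of_lt_one hr2
  have hNpos : (0 : ℝ) < (N : ℝ)⁻¹ := by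
    have : (0:ℝ) < N := by exact_mod_cast hN
    positivity
  have hev2 : ∀ᶠ n : ℕ in Filter.atTop, r ^ n < ENNReal.ofReal ((N : ℝ)⁻¹) :=
    hrtop.eventually_lt_const (ENNReal.ofReal_pos.mpr hNpos)
  obtain ⟨n, hn⟩ := ((hev1.and hev2).and (Filter.eventually_ge_atTop 1)).exists
  obtain ⟨⟨hb1, hb2⟩, hn1⟩ := hn
  have hn0 : (n : ℝ) ≠ 0 := by
    have : 0 < n := hn1
    positivity
  have hx : (‖Mc ^ n‖₊ : ENNReal) < ENNReal.ofReal ((N : ℝ)⁻¹) := by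
    calc (‖Mc ^ n‖₊ : ENNReal)
        = ((‖Mc ^ n‖₊ : ENNReal) ^ (1 / (n : ℝ))) ^ (n : ℕ) := by
          rw [← ENNReal.rpow_natCast _ n, ← ENNReal.rpow_mul, one_div,
            inv_mul_cancel₀ hn0, ENNReal.rpow_one]
      _ ≤ r ^ n := pow_le_pow_left' hb1.le n
      _ < ENNReal.ofReal ((N : ℝ)⁻¹) := hb2
  have hxr : ‖Mc ^ n‖ < (N : ℝ)⁻¹ := by
    rw [← ENNReal.ofReal_coe_nnreal, coe_nnnorm] at hx
    exact (ENNReal.ofReal_lt_ofReal_iff hNpos).mp hx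
  -- entries of M ^ n are small
  have hMcpow : Mc ^ n = (M ^ n).map (Complex.ofReal ·) := by
    have h : Mc = Complex.ofRealHom.mapMatrix M := rfl
    rw [h, ← map_pow]; rfl
  have entry_le : ∀ (A : Matrix (Fin N) (Fin N) ℂ) (i j : Fin N), ‖A i j‖ ≤ ‖A‖ := by
    intro A i j
    have h1 : ‖A i j‖₊ ≤ ∑ p, ‖A i p‖₊ :=
      Finset.single_le_sum (f := fun p => ‖A i p‖₊) (fun _ _ => zero_le) (mem_univ j)
    have h2 : (∑ p, ‖A i p‖₊) ≤ Finset.univ.sup fun q => ∑ p, ‖A q p‖₊ :=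
      Finset.le_sup (f := fun q => ∑ p, ‖A q p‖₊) (mem_univ i)
    have h3 := h1.trans h2
    rw [← Matrix.linfty_opNNNorm_def] at h3
    exact_mod_cast h3
  have hsmall : ∀ i j, (M ^ n) i j < (N : ℝ)⁻¹ := by
    intro i j
    have h1 : ‖(Mc ^ n) i j‖ ≤ ‖Mc ^ n‖ := entry_le _ i j
    have h2 : (Mc ^ n) i j = Complex.ofReal ((M ^ n) i j) := by
      rw [hMcpow]; rfl
    rw [h2, Complex.norm_real, Real.norm_eq_abs, abs_of_nonneg (hpow_nn n i j)] at h1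
    exact lt_of_le_of_lt h1 hxr
  -- column sums of powers
  set c : ℕ → Fin N → ℝ := fun k j => ∑ i, (M ^ k) i j with hc
  have hc_nn : ∀ k j, 0 ≤ c k j := fun k j =>
    Finset.sum_nonneg fun i _ => hpow_nn k i j
  have hc0 : ∀ j, c 0 j = 1 := by
    intro j
    simp [hc, Matrix.one_apply]
  have hcn : ∀ j, c n j < 1 := by
    intro j
    have h1 : c n j < ∑ _i : Fin N, (N : ℝ)⁻¹ :=
      Finset.sum_lt_sum_of_nonempty univ_nonempty fun i _ => hsmall i j
    have h2 : (∑ _i : Fin N, (N : ℝ)⁻¹) = 1 := by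
      rw [Finset.sum_const, card_univ, Fintype.card_fin, nsmul_eq_mul]
      field_simp
    rwa [h2] at h1
  have key : ∀ k j, (∑ i, c k i * M i j) = c (k + 1) j := by
    intro k j
    simp only [hc]
    calc (∑ i, (∑ p, (M ^ k) p i) * M i j)
        = ∑ i, ∑ p, (M ^ k) p i * M i j := by
          refine Finset.sum_congr rfl fun i _ => ?_
          rw [Finset.sum_mul]
      _ = ∑ p, ∑ i, (M ^ k) p i * M i j := Finset.sum_comm
      _ = ∑ p, (M ^ (k + 1)) p j := by
          refine Finset.sum_congr rfl fun p _ => ?_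
          rw [pow_succ, Matrix.mul_apply]
  -- the vector ν
  set ν : Fin N → ℝ := fun j => ∑ k ∈ Finset.range n, c k j with hν
  have hνpos : ∀ j, 0 < ν j := by
    intro j
    have h1 : c 0 j ≤ ν j :=
      Finset.single_le_sum (f := fun k => c k j) (fun k _ => hc_nn k j)
        (Finset.mem_range.mpr hn1)
    rw [hc0 j] at h1
    linarith
  have hmain : ∀ j, (∑ i, ν i * M i j) < ν j := by
    intro j
    have h1 : (∑ i, ν i * M i j) = ∑ k ∈ Finset.range n, c (k + 1) j := by
      calc (∑ i, ν i * M i j)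
          = ∑ i, ∑ k ∈ Finset.range n, c k i * M i j := by
            refine Finset.sum_congr rfl fun i _ => ?_
            rw [hν, Finset.sum_mul]
        _ = ∑ k ∈ Finset.range n, ∑ i, c k i * M i j := Finset.sum_comm
        _ = ∑ k ∈ Finset.range n, c (k + 1) j :=
            Finset.sum_congr rfl fun k _ => key k j
    have h2 : (∑ k ∈ Finset.range n, c (k + 1) j) + c 0 j
        = ∑ k ∈ Finset.range (n + 1), c k j := (Finset.sum_range_succ' (fun k => c k j) n).symm
    have h3 : (∑ k ∈ Finset.range (n + 1), c k j) = ν j + c n j := by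
      rw [Finset.sum_range_succ, hν]
    have h4 := hcn j
    have h5 := hc0 j
    rw [h1]
    linarith
  -- conclude
  refine ⟨fun i => ν i / lamHat i, fun i => div_pos (hνpos i) (hlam i), fun j => ?_⟩
  have hsplit : (∑ i, ν i / lamHat i * (-(Matrix.diagonal lamHat) + Δ) i j)
      = -(ν j) + ∑ i, ν i * M i j := by
    have h1 : ∀ i, ν i / lamHat i * (-(Matrix.diagonal lamHat) + Δ) i j
        = -(ν i / lamHat i * (Matrix.diagonal lamHat) i j) + ν i * M i j := by
      intro i
      rw [hMentry]
      simp only [Matrix.add_apply, Matrix.neg_apply]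
      field_simp
    rw [Finset.sum_congr rfl fun i _ => h1 i, Finset.sum_add_distrib]
    congr 1
    have h2 : ∀ i, -(ν i / lamHat i * (Matrix.diagonal lamHat) i j)
        = if i = j then -(ν j) else 0 := by
      intro i
      by_cases h : i = j
      · subst h
        rw [Matrix.diagonal_apply_eq, div_mul_cancel₀ _ (hlam i).ne', if_pos rfl]
      · rw [Matrix.diagonal_apply_ne _ h, if_neg h]
        ring
    rw [Finset.sum_congr rfl fun i _ => h2 i, Finset.sum_ite_eq' _ j fun _ => -(ν j),
      if_pos (mem_univ j)]
  rw [hsplit]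
  have := hmain j
  linarith
end

section
/- Let N ≥ 2 be an integer. For each i ∈ {1,…,N}, let P_i be a nonempty finite set and Q_i : P_i × P_i → ℝ a function with Σ_{p'_i ∈ P_i} Q_i(p_i, p'_i) = 0 for every p_i ∈ P_i; define Q on ∏_{i=1}^N P_i by Q(p, p') := Σ_{i=1}^N Q_i(p_i, p'_i)·∏_{j≠i} 1[p_j = p'_j]. Let μ_i > 0, λ̂_i > 0, δ̂_{ij} ≥ 0 with δ̂_{ii} = 0 be constants such that c_i := μ_i λ̂_i − Σ_{j≠i} μ_j δ̂_{ji} > 0 for every i. Let κ_i, γ̂_i, α_i : [0,∞) → [0,∞) be of class K∞ and ρ_i : [0,∞) → [0,∞) nondecreasing, with κ_i(s) ≥ λ̂_i γ̂_i(s) and ρ_i((N−1)·α_j⁻¹(s)) ≤ δ̂_{ij} γ̂_j(s) for all s ≥ 0 and all j ≠ i. For each i and p_i ∈ P_i let ψ_{i,p_i} ≥ 0, and set ψ := Σ_{i=1}^N μ_i·max_{p_i∈P_i} ψ_{i,p_i} and κ(s) := inf{ Σ_{i=1}^N c_i γ̂_i(β_i) : β ∈ [0,∞)^N, Σ_{i=1}^N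 μ_i β_i = s }. Fix p ∈ ∏_{i=1}^N P_i and suppose each i is given a real number a_i, a function b_i : P_i → [0,∞), and a real y_i ≥ 0 with α_i(y_i) ≤ b_i(p_i), such that a_i + Σ_{p'_i ∈ P_i} Q_i(p_i, p'_i) b_i(p'_i) ≤ −κ_i(b_i(p_i)) + ρ_i(Σ_{j≠i} y_j) + ψ_{i,p_i}. Then Σ_{i=1}^N μ_i a_i + Σ_{p' ∈ ∏_i P_i} Q(p, p')·(Σ_{i=1}^N μ_i b_i(p'_i)) ≤ −κ(Σ_{i=1}^N μ_i b_i(p_i)) + ψ. -/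
open Finset

lemma switch_sum_aux {N : ℕ} (P : Fin N → Type) [∀ i, Fintype (P i)]
    [∀ i, DecidableEq (P i)]
    (Q : ∀ i, P i → P i → ℝ) (hQrow : ∀ i (pi : P i), ∑ p'i : P i, Q i pi p'i = 0)
    (μ : Fin N → ℝ) (b : ∀ i, P i → ℝ) (p : ∀ i, P i) :
    ∑ p' : ∀ i, P i,
        (∑ i, Q i (p i) (p' i) * ∏ j ∈ univ.erase i, (if p j = p' j then (1:ℝ) else 0))
          * (∑ i, μ i * b i (p' i))
      = ∑ i, μ i * ∑ p'i : P i, Q i (p i) p'i * b i p'i := by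
  simp only [sum_mul]
  rw [Finset.sum_comm]
  refine Finset.sum_congr rfl fun i _ => ?_
  have key : ∀ p' : ∀ j, P j,
      Q i (p i) (p' i) * (∏ j ∈ univ.erase i, (if p j = p' j then (1:ℝ) else 0))
        * (∑ k, μ k * b k (p' k))
      = if ∀ j ∈ univ.erase i, p j = p' j then
          Q i (p i) (p' i) * (∑ k, μ k * b k (p' k)) else 0 := by
    intro p'
    rw [Finset.prod_boole]
    by_cases h : ∀ j ∈ univ.erase i, p j = p' j <;> simp [h]
  simp only [key]
  rw [← Finset.sum_filter]
  rw [Finset.sum_bij' (i := fun p' _ => p' i) (j := fun q _ => Function.update p i q)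
    (t := (univ : Finset (P i)))
    (g := fun q => Q i (p i) q * (∑ k, μ k * b k (Function.update p i q k)))
    (hi := fun _ _ => mem_univ _)
    (hj := by
      intro q _
      simp only [mem_filter, mem_univ, true_and, mem_erase]
      rintro j ⟨hj, -⟩
      rw [Function.update_of_ne hj])
    (left_neg := by
      intro p' hp'
      simp only [mem_filter, mem_univ, true_and] at hp'
      funext j
      by_cases hj : j = i
      · subst hj; simp
      · show Function.update p i (p' i) j = p' j
        rw [Function.update_of_ne hj]
        exact (hp' j (mem_erase.2 ⟨hj, mem_univ _⟩))
    )
    (right_neg := by intro q _; simp)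
    (h := by
      intro p' hp'
      simp only [mem_filter, mem_univ, true_and] at hp'
      have : Function.update p i (p' i) = p' := by
        funext j
        by_cases hj : j = i
        · subst hj; simp
        · rw [Function.update_of_ne hj]
          exact hp' j (mem_erase.2 ⟨hj, mem_univ _⟩)
      simp [this])]
  have hupd : ∀ q : P i, (∑ k, μ k * b k (Function.update p i q k))
      = μ i * b i q + ∑ k ∈ univ.erase i, μ k * b k (p k) := by
    intro q
    rw [← Finset.add_sum_erase _ _ (mem_univ i), Function.update_self]
    congr 1
    refine Finset.sum_congr rfl fun k hk => ?_
    rw [Function.update_of_ne (mem_erase.1 hk).1]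
  simp only [hupd, mul_add]
  rw [Finset.sum_add_distrib, ← Finset.sum_mul, hQrow, zero_mul, add_zero,
    Finset.mul_sum]
  refine Finset.sum_congr rfl fun q _ => by ring

/-- The full pointwise form of condition (B3) in the compositionality theorem
(Theorem 4.4): if each subsystem pseudo-barrier satisfies its dissipation inequality
(`a i` playing the role of `ℒB_{i,p_i}(x_i)`, `b i p'` of `B_{i,p'}(x_i)`, and `y j` of
`‖h_j(x_j)‖²`), then under the small-gain conditions the composed function
`B(x,p) = ∑ i, μ i * b i (p i)` satisfies the composed decrease condition with
`κ(s) = inf{∑ i, c_i γ̂_i(β_i) : β ≥ 0, ∑ i μ_i β_i = s}` and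
`ψ = ∑ i, μ i * max_{p_i} ψ_{i,p_i}`. -/
theorem compositional_decrease_condition
    (N : ℕ) (hN : 2 ≤ N)
    (P : Fin N → Type) [∀ i, Fintype (P i)] [∀ i, Nonempty (P i)]
    [∀ i, DecidableEq (P i)]
    -- subsystem generators with zero row sums
    (Q : ∀ i, P i → P i → ℝ)
    (hQrow : ∀ i (pi : P i), ∑ p'i : P i, Q i pi p'i = 0)
    -- small-gain constants
    (μ lamHat : Fin N → ℝ) (δHat : Fin N → Fin N → ℝ)
    (hμ : ∀ i, 0 < μ i) (hlamHat : ∀ i, 0 < lamHat i)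
    (hδ : ∀ i j, 0 ≤ δHat i j) (hδdiag : ∀ i, δHat i i = 0)
    (c : Fin N → ℝ)
    (hc : ∀ i, c i = μ i * lamHat i - ∑ j ∈ univ.erase i, μ j * δHat j i)
    (hcpos : ∀ i, 0 < c i)
    -- class K∞ functions and the small-gain assumption
    (κ γHat α : Fin N → ℝ → ℝ)
    (hκK : ∀ i, IsKInf (κ i)) (hγK : ∀ i, IsKInf (γHat i)) (hαK : ∀ i, IsKInf (α i))
    (αinv : Fin N → ℝ → ℝ)
    (hαinv_nonneg : ∀ i s, 0 ≤ s → 0 ≤ αinv i s)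
    (hαinv_right : ∀ i s, 0 ≤ s → α i (αinv i s) = s)
    (hαinv_left : ∀ i t, 0 ≤ t → αinv i (α i t) = t)
    (ρ : Fin N → ℝ → ℝ)
    (hρmono : ∀ i, MonotoneOn (ρ i) (Set.Ici 0))
    (hρnonneg : ∀ i s, 0 ≤ s → 0 ≤ ρ i s)
    (hgain1 : ∀ i (s : ℝ), 0 ≤ s → lamHat i * γHat i s ≤ κ i s)
    (hgain2 : ∀ i j, j ≠ i → ∀ s : ℝ, 0 ≤ s →
        ρ i ((N - 1 : ℝ) * αinv j s) ≤ δHat i j * γHat j s)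
    -- mode-dependent offsets and the composed offset and decay function
    (ψ : ∀ i, P i → ℝ) (hψ : ∀ i (pi : P i), 0 ≤ ψ i pi)
    (ψtot : ℝ) (hψtot : ψtot = ∑ i, μ i * univ.sup' univ_nonempty (ψ i))
    (κtot : ℝ → ℝ)
    (hκtot : ∀ s : ℝ, κtot s = sInf {t : ℝ | ∃ β : Fin N → ℝ,
        (∀ i, 0 ≤ β i) ∧ (∑ i, μ i * β i) = s ∧ t = ∑ i, c i * γHat i (β i)})
    -- the fixed mode, generator values, barrier values and output bounds
    (p : ∀ i, P i)
    (a : Fin N → ℝ) (b : ∀ i, P i → ℝ) (hb : ∀ i (p'i : P i), 0 ≤ b i p'i)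
    (y : Fin N → ℝ) (hy : ∀ i, 0 ≤ y i)
    (hαyb : ∀ i, α i (y i) ≤ b i (p i))
    -- the subsystem dissipation inequalities
    (hdissip : ∀ i, a i + ∑ p'i : P i, Q i (p i) p'i * b i p'i ≤
        -(κ i (b i (p i))) + ρ i (∑ j ∈ univ.erase i, y j) + ψ i (p i)) :
    ∑ i, μ i * a i
      + ∑ p' : ∀ i, P i,
          (∑ i, Q i (p i) (p' i) * ∏ j ∈ univ.erase i, (if p j = p' j then (1:ℝ) else 0))
            * (∑ i, μ i * b i (p' i))
      ≤ -(κtot (∑ i, μ i * b i (p i))) + ψtot := by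

  have hD0 : ∀ i, 0 ≤ b i (p i) := fun i => hb i (p i)
  have hγb : ∀ i, 0 ≤ γHat i (b i (p i)) := fun i => (hγK i).1 _ (hD0 i)
  have hN1 : (0:ℝ) ≤ (N:ℝ) - 1 := by
    have : (2:ℝ) ≤ (N:ℝ) := by exact_mod_cast hN
    linarith
  -- bound on ρ i applied to the internal inputs
  have hρbound : ∀ i, ρ i (∑ j ∈ univ.erase i, y j)
      ≤ ∑ j ∈ univ.erase i, δHat i j * γHat j (b j (p j)) := by
    intro i
    have : Nontrivial (Fin N) := Fin.nontrivial_iff_two_le.mpr hN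
    obtain ⟨j1, hj1⟩ := exists_ne i
    have hne : (univ.erase i).Nonempty := ⟨j1, mem_erase.2 ⟨hj1, mem_univ _⟩⟩
    obtain ⟨j0, hj0mem, hj0max⟩ := Finset.exists_max_image (univ.erase i) y hne
    have hj0ne : j0 ≠ i := (mem_erase.1 hj0mem).1
    have hcard : (((univ.erase i).card : ℕ) : ℝ) = (N:ℝ) - 1 := by
      rw [card_erase_of_mem (mem_univ i), card_univ, Fintype.card_fin]
      have h1 : 1 ≤ N := le_trans one_le_two hN
      rw [Nat.cast_sub h1, Nat.cast_one]
    have hsum0 : 0 ≤ ∑ j ∈ univ.erase i, y j :=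
      Finset.sum_nonneg fun j _ => hy j
    have hsum_le : ∑ j ∈ univ.erase i, y j ≤ ((N:ℝ)-1) * y j0 := by
      have h := Finset.sum_le_card_nsmul (univ.erase i) y (y j0) fun x hx => hj0max x hx
      rwa [nsmul_eq_mul, hcard] at h
    have hyle : y j0 ≤ αinv j0 (b j0 (p j0)) := by
      have h1 : α j0 (y j0) ≤ α j0 (αinv j0 (b j0 (p j0))) := by
        rw [hαinv_right j0 _ (hD0 j0)]; exact hαyb j0
      exact ((hαK j0).2.2.1.le_iff_le (Set.mem_Ici.2 (hy j0))
        (Set.mem_Ici.2 (hαinv_nonneg _ _ (hD0 j0)))).1 h1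
    have hy0 : (0:ℝ) ≤ ((N:ℝ)-1) * y j0 := mul_nonneg hN1 (hy j0)
    have hai0 : (0:ℝ) ≤ ((N:ℝ)-1) * αinv j0 (b j0 (p j0)) :=
      mul_nonneg hN1 (hαinv_nonneg _ _ (hD0 j0))
    calc ρ i (∑ j ∈ univ.erase i, y j)
        ≤ ρ i (((N:ℝ)-1) * y j0) :=
          hρmono i (Set.mem_Ici.2 hsum0) (Set.mem_Ici.2 hy0) hsum_le
      _ ≤ ρ i (((N:ℝ)-1) * αinv j0 (b j0 (p j0))) :=
          hρmono i (Set.mem_Ici.2 hy0) (Set.mem_Ici.2 hai0)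
            (mul_le_mul_of_nonneg_left hyle hN1)
      _ ≤ δHat i j0 * γHat j0 (b j0 (p j0)) := hgain2 i j0 hj0ne _ (hD0 j0)
      _ ≤ ∑ j ∈ univ.erase i, δHat i j * γHat j (b j (p j)) :=
          Finset.single_le_sum
            (fun j _ => mul_nonneg (hδ i j) ((hγK j).1 _ (hD0 j))) hj0mem
  -- the swap of the double sum
  have hswap : ∑ i, ∑ j ∈ univ.erase i, μ i * (δHat i j * γHat j (b j (p j)))
      = ∑ j, (∑ i ∈ univ.erase j, μ i * δHat i j) * γHat j (b j (p j)) := by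
    rw [Finset.sum_comm' (s := univ) (t := fun i => univ.erase i) (t' := univ)
      (s' := fun j => univ.erase j)
      (fun x y => by simp only [mem_univ, mem_erase, true_and, and_true, ne_eq]
                     exact ⟨fun h => fun hxy => h hxy.symm, fun h => fun hxy => h hxy.symm⟩)]
    refine Finset.sum_congr rfl fun j _ => ?_
    rw [Finset.sum_mul]
    exact Finset.sum_congr rfl fun i _ => by ring
  -- κtot at the composed barrier value is below the candidate sum
  have hκtot_le : κtot (∑ i, μ i * b i (p i)) ≤ ∑ i, c i * γHat i (b i (p i)) := by
    rw [hκtot]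
    apply csInf_le
    · refine ⟨0, ?_⟩
      rintro t ⟨β, hβ0, -, rfl⟩
      exact Finset.sum_nonneg fun i _ => mul_nonneg (hcpos i).le ((hγK i).1 _ (hβ0 i))
    · exact ⟨fun i => b i (p i), hD0, rfl, rfl⟩
  -- rewrite the switching term
  rw [switch_sum_aux P Q hQrow μ b p, ← Finset.sum_add_distrib]
  calc ∑ i, (μ i * a i + μ i * ∑ p'i : P i, Q i (p i) p'i * b i p'i)
      = ∑ i, μ i * (a i + ∑ p'i : P i, Q i (p i) p'i * b i p'i) := by
        exact Finset.sum_congr rfl fun i _ => (mul_add _ _ _).symm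
    _ ≤ ∑ i, μ i * (-(κ i (b i (p i))) + ρ i (∑ j ∈ univ.erase i, y j) + ψ i (p i)) :=
        Finset.sum_le_sum fun i _ => mul_le_mul_of_nonneg_left (hdissip i) (hμ i).le
    _ ≤ ∑ i, μ i * (-(lamHat i * γHat i (b i (p i)))
          + (∑ j ∈ univ.erase i, δHat i j * γHat j (b j (p j)))
          + univ.sup' univ_nonempty (ψ i)) := by
        refine Finset.sum_le_sum fun i _ => mul_le_mul_of_nonneg_left ?_ (hμ i).le
        have h1 := hgain1 i (b i (p i)) (hD0 i)
        have h2 := hρbound i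
        have h3 := Finset.le_sup' (ψ i) (mem_univ (p i))
        linarith
    _ = -(∑ i, c i * γHat i (b i (p i))) + ψtot := by
        have e1 : ∀ i : Fin N, μ i * (-(lamHat i * γHat i (b i (p i)))
              + (∑ j ∈ univ.erase i, δHat i j * γHat j (b j (p j)))
              + univ.sup' univ_nonempty (ψ i))
            = -(μ i * lamHat i * γHat i (b i (p i)))
              + (∑ j ∈ univ.erase i, μ i * (δHat i j * γHat j (b j (p j))))
              + μ i * univ.sup' univ_nonempty (ψ i) := by
          intro i
          rw [mul_add, mul_add, Finset.mul_sum]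
          ring_nf
        simp only [e1]
        rw [Finset.sum_add_distrib, Finset.sum_add_distrib, hswap, hψtot,
          Finset.sum_neg_distrib]
        have e2 : ∑ i, c i * γHat i (b i (p i))
            = ∑ i, (μ i * lamHat i * γHat i (b i (p i))
                - (∑ j ∈ univ.erase i, μ j * δHat j i) * γHat i (b i (p i))) := by
          refine Finset.sum_congr rfl fun i _ => ?_
          rw [hc i]; ring
        rw [e2, Finset.sum_sub_distrib]
        ring
    _ ≤ -(κtot (∑ i, μ i * b i (p i))) + ψtot := by linarith
end
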